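/- The map X ↦ C_X, where C_X(H) = X*H − H*X, is an isomorphism of real Lie algebras from sq(3) = {X ∈ M₃(ℍ) : Xᴴ = −X} (the antihermitian 3×3 quaternionic matrices with commutator bracket) onto the Lie algebra of Jordan derivations of H₃(ℍ) (with the commutator bracket of endomorphisms). -/

import Mathlib

open Matrix Quaternion

attribute [local instance 100] LieRing.ofAssociativeRing

instance : StarModule ℝ ℍ[ℝ] := ⟨fun r q => by ext <;> simp⟩

/-- The real vector space `H₃(ℍ)` of hermitian 3×3 quaternionic matrices, as a submodule of
the 3×3 quaternionic matrices. -/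
noncomputable def herm3H : Submodule ℝ (Matrix (Fin 3) (Fin 3) ℍ[ℝ]) where
  carrier := {H | Hᴴ = H}
  add_mem' := by
    intro a b ha hb
    simp only [Set.mem_setOf_eq] at *
    rw [conjTranspose_add, ha, hb]
  zero_mem' := by simp [Set.mem_setOf_eq]
  smul_mem' := by
    intro r H hH
    simp only [Set.mem_setOf_eq] at *
    rw [conjTranspose_smul, hH, star_trivial]

/-- The Jordan product `H∘K = HK + KH` on `H₃(ℍ)`. -/
noncomputable def jpH (H K : herm3H) : herm3H :=
  ⟨H.1 * K.1 + K.1 * H.1, by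
    have hH : (H.1)ᴴ = H.1 := H.2
    have hK : (K.1)ᴴ = K.1 := K.2
    show (H.1 * K.1 + K.1 * H.1)ᴴ = H.1 * K.1 + K.1 * H.1
    rw [conjTranspose_add, conjTranspose_mul, conjTranspose_mul, hH, hK, add_comm]⟩

lemma jpH_addl (a b c : herm3H) : jpH (a + b) c = jpH a c + jpH b c := by
  apply Subtype.ext
  simp only [jpH, Submodule.coe_add, add_mul, mul_add]
  abel

lemma jpH_addr (a b c : herm3H) : jpH a (b + c) = jpH a b + jpH a c := by
  apply Subtype.ext
  simp only [jpH, Submodule.coe_add, add_mul, mul_add]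
  abel

lemma jpH_subl (a b c : herm3H) : jpH (a - b) c = jpH a c - jpH b c := by
  apply Subtype.ext
  simp only [jpH, Submodule.coe_sub, sub_mul, mul_sub, AddSubgroupClass.coe_sub]
  abel

lemma jpH_subr (a b c : herm3H) : jpH a (b - c) = jpH a b - jpH a c := by
  apply Subtype.ext
  simp only [jpH, Submodule.coe_sub, sub_mul, mul_sub, AddSubgroupClass.coe_sub]
  abel

lemma jpH_smull (r : ℝ) (a c : herm3H) : jpH (r • a) c = r • jpH a c := by
  apply Subtype.ext
  simp [jpH, smul_mul_assoc, mul_smul_comm, smul_add]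

lemma jpH_smulr (r : ℝ) (a c : herm3H) : jpH a (r • c) = r • jpH a c := by
  apply Subtype.ext
  simp [jpH, smul_mul_assoc, mul_smul_comm, smul_add]

/-- The real Lie algebra of Jordan derivations of `H₃(ℍ)`, as a Lie subalgebra of the
endomorphisms of `H₃(ℍ)` with the commutator bracket. -/
noncomputable def jderH : LieSubalgebra ℝ (Module.End ℝ herm3H) where
  carrier := {D | ∀ H K, D (jpH H K) = jpH (D H) K + jpH H (D K)}
  add_mem' := by
    intro D1 D2 h1 h2 H K
    simp only [LinearMap.add_apply, h1 H K, h2 H K, jpH_addl, jpH_addr]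
    abel
  zero_mem' := by
    intro H K
    simp only [LinearMap.zero_apply]
    have : jpH (0 : herm3H) K = 0 := Subtype.ext (by simp [jpH])
    have h2 : jpH H (0 : herm3H) = 0 := Subtype.ext (by simp [jpH])
    rw [this, h2, add_zero]
  smul_mem' := by
    intro r D hD H K
    simp only [LinearMap.smul_apply, hD H K, jpH_smull, jpH_smulr, smul_add]
  lie_mem' := by
    intro D1 D2 h1 h2 H K
    replace h1 : ∀ a b : herm3H, D1 (jpH a b) = jpH (D1 a) b + jpH a (D1 b) := h1
    replace h2 : ∀ a b : herm3H, D2 (jpH a b) = jpH (D2 a) b + jpH a (D2 b) := h2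
    simp only [Ring.lie_def, LinearMap.sub_apply, Module.End.mul_apply, h2, map_add, h1,
      jpH_subl, jpH_subr, jpH_addl, jpH_addr]
    abel
  
/-- The real Lie algebra `sq(3)` of antihermitian 3×3 quaternionic matrices. -/
noncomputable def sq3 : LieSubalgebra ℝ (Matrix (Fin 3) (Fin 3) ℍ[ℝ]) where
  carrier := {X | Xᴴ = -X}
  add_mem' := by
    intro a b ha1 hb1
    simp only [Set.mem_setOf_eq] at *
    rw [conjTranspose_add, ha1, hb1, neg_add]
  zero_mem' := by simp [Set.mem_setOf_eq]
  smul_mem' := by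
    intro r X h1
    simp only [Set.mem_setOf_eq] at *
    rw [conjTranspose_smul, h1, star_trivial, smul_neg]
  lie_mem' := by
    intro X Y hX1 hY1
    simp only [Set.mem_setOf_eq] at *
    rw [Ring.lie_def, conjTranspose_sub, conjTranspose_mul, conjTranspose_mul, hX1, hY1]
    simp only [neg_mul, mul_neg, neg_neg, neg_sub]

set_option synthInstance.maxHeartbeats 1000000
set_option maxHeartbeats 1000000

abbrev M3 := Matrix (Fin 3) (Fin 3) ℍ[ℝ]

lemma herm_ext {a b : herm3H} (h : a.1 = b.1) : a = b := Subtype.ext h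

/-- C_X as an endomorphism of herm3H -/
noncomputable def cEnd (X : M3) (hX : Xᴴ = -X) : Module.End ℝ herm3H where
  toFun H := ⟨X * H.1 - H.1 * X, by
    show (X * H.1 - H.1 * X)ᴴ = _
    rw [conjTranspose_sub, conjTranspose_mul, conjTranspose_mul, H.2, hX]
    simp only [mul_neg, neg_mul, sub_neg_eq_add, neg_add_eq_sub]⟩
  map_add' a b := by
    apply herm_ext
    show X * (a.1 + b.1) - (a.1 + b.1) * X = (X * a.1 - a.1 * X) + (X * b.1 - b.1 * X)
    noncomm_ring
  map_smul' r a := by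
    apply herm_ext
    show X * (r • a.1) - (r • a.1) * X = r • (X * a.1 - a.1 * X)
    simp [mul_smul_comm, smul_mul_assoc, smul_sub]

@[simp] lemma cEnd_apply (X : M3) (hX : Xᴴ = -X) (H : herm3H) :
    ((cEnd X hX H : herm3H) : M3) = X * H.1 - H.1 * X := rfl

lemma cEnd_mem (X : M3) (hX : Xᴴ = -X) : cEnd X hX ∈ jderH := by
  intro H K
  apply herm_ext
  show X * (H.1 * K.1 + K.1 * H.1) - (H.1 * K.1 + K.1 * H.1) * X =
    ((X * H.1 - H.1 * X) * K.1 + K.1 * (X * H.1 - H.1 * X)) +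
      (H.1 * (X * K.1 - K.1 * X) + (X * K.1 - K.1 * X) * H.1)
  noncomm_ring

/-- the morphism sq3 → jderH -/
noncomputable def cHom : sq3 →ₗ⁅ℝ⁆ jderH where
  toFun X := ⟨cEnd X.1 X.2, cEnd_mem X.1 X.2⟩
  map_add' a b := by
    apply Subtype.ext; apply LinearMap.ext; intro H; apply herm_ext
    show (a.1 + b.1) * H.1 - H.1 * (a.1 + b.1) = (a.1 * H.1 - H.1 * a.1) + (b.1 * H.1 - H.1 * b.1)
    noncomm_ring
  map_smul' r a := by
    apply Subtype.ext; apply LinearMap.ext; intro H; apply herm_ext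
    show (r • a.1) * H.1 - H.1 * (r • a.1) = r • (a.1 * H.1 - H.1 * a.1)
    simp [mul_smul_comm, smul_mul_assoc, smul_sub]
  map_lie' := by
    intro a b
    apply Subtype.ext; apply LinearMap.ext; intro H; apply herm_ext
    show (a.1 * b.1 - b.1 * a.1) * H.1 - H.1 * (a.1 * b.1 - b.1 * a.1) =
      (a.1 * (b.1 * H.1 - H.1 * b.1) - (b.1 * H.1 - H.1 * b.1) * a.1) -
        (b.1 * (a.1 * H.1 - H.1 * a.1) - (a.1 * H.1 - H.1 * a.1) * b.1)
    noncomm_ring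

lemma half_cancel {V : Type*} [AddCommGroup V] [Module ℝ V] {x y : V}
    (h : x + x = y + y) : x = y := by
  have h2 : (2:ℝ) • x = (2:ℝ) • y := by rw [two_smul, two_smul]; exact h
  have := congrArg (fun v => (2:ℝ)⁻¹ • v) h2
  simpa [smul_smul] using this

lemma herm_entry (H : herm3H) (a b : Fin 3) : star (H.1 a b) = H.1 b a := by
  have := congrFun (congrFun H.2 b) a
  simpa [Matrix.conjTranspose_apply] using this

lemma quat_real_of_star_eq {q : ℍ[ℝ]} (h : star q = q) : (q.re : ℍ[ℝ]) = q := by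
  have h1 := congrArg QuaternionAlgebra.imI h
  have h2 := congrArg QuaternionAlgebra.imJ h
  have h3 := congrArg QuaternionAlgebra.imK h
  simp at h1 h2 h3
  ext <;> simp <;> linarith

lemma quat_imag_of_star_eq_neg {q : ℍ[ℝ]} (h : q.re = 0) : star q = -q := by
  ext <;> simp [h]

/-- diagonal generator -/
noncomputable def dE (i : Fin 3) : herm3H :=
  ⟨Matrix.single i i 1, by
    show _ᴴ = _
    refine Matrix.ext fun a b => ?_
    simp only [Matrix.conjTranspose_apply, Matrix.single, Matrix.of_apply,
      apply_ite (star : ℍ[ℝ] → ℍ[ℝ]), star_one, star_zero, and_comm]⟩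

/-- off-diagonal generator -/
noncomputable def oE (i j : Fin 3) (q : ℍ[ℝ]) : herm3H :=
  ⟨Matrix.single i j q + Matrix.single j i (star q), by
    show _ᴴ = _
    refine Matrix.ext fun a b => ?_
    simp only [Matrix.conjTranspose_apply, Matrix.add_apply, Matrix.single,
      Matrix.of_apply, star_add, apply_ite (star : ℍ[ℝ] → ℍ[ℝ]), star_star, star_zero]
    by_cases h1 : i = a <;> by_cases h2 : j = b <;> by_cases h3 : j = a <;>
      by_cases h4 : i = b <;> simp [h1, h2, h3, h4] <;>
      (try abel) <;> by_cases h5 : a = b <;> simp [h5, eq_comm] <;> abel⟩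

lemma oE_add (i j : Fin 3) (p q : ℍ[ℝ]) : oE i j (p + q) = oE i j p + oE i j q := by
  apply herm_ext
  show _ = _
  simp only [oE, Submodule.coe_add, star_add, Matrix.single_add]
  abel

lemma oE_smul (i j : Fin 3) (r : ℝ) (q : ℍ[ℝ]) : oE i j (r • q) = r • oE i j q := by
  apply herm_ext
  show _ = _
  simp only [oE, SetLike.val_smul, Quaternion.star_smul, Matrix.smul_single, smul_add]

namespace QuatDer

noncomputable def iq : ℍ[ℝ] := ⟨0,1,0,0⟩
noncomputable def jq : ℍ[ℝ] := ⟨0,0,1,0⟩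
noncomputable def kq : ℍ[ℝ] := ⟨0,0,0,1⟩

@[simp] lemma iq_re : iq.re = 0 := rfl
@[simp] lemma iq_imI : iq.imI = 1 := rfl
@[simp] lemma iq_imJ : iq.imJ = 0 := rfl
@[simp] lemma iq_imK : iq.imK = 0 := rfl
@[simp] lemma jq_re : jq.re = 0 := rfl
@[simp] lemma jq_imI : jq.imI = 0 := rfl
@[simp] lemma jq_imJ : jq.imJ = 1 := rfl
@[simp] lemma jq_imK : jq.imK = 0 := rfl
@[simp] lemma kq_re : kq.re = 0 := rfl
@[simp] lemma kq_imI : kq.imI = 0 := rfl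
@[simp] lemma kq_imJ : kq.imJ = 0 := rfl
@[simp] lemma kq_imK : kq.imK = 1 := rfl

lemma quat_decomp (q : ℍ[ℝ]) :
    q = q.re • (1:ℍ[ℝ]) + q.imI • iq + q.imJ • jq + q.imK • kq := by
  ext <;> simp

lemma quat_inner_der (g : ℍ[ℝ] → ℍ[ℝ])
    (hadd : ∀ p q, g (p + q) = g p + g q)
    (hsmul : ∀ (r : ℝ) (q : ℍ[ℝ]), g (r • q) = r • g q)
    (hder : ∀ p q, g (p * q) = g p * q + p * g q) :
    ∃ u : ℍ[ℝ], u.re = 0 ∧ ∀ q, g q = u * q - q * u := by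
  have h1 : g 1 = 0 := by
    have := hder 1 1
    simp only [one_mul, mul_one] at this
    exact (left_eq_add.mp this)
  have hiisq : iq * iq = -1 := by ext <;> simp [Quaternion.re_mul, Quaternion.imI_mul,
    Quaternion.imJ_mul, Quaternion.imK_mul]
  have hjjsq : jq * jq = -1 := by ext <;> simp [Quaternion.re_mul, Quaternion.imI_mul,
    Quaternion.imJ_mul, Quaternion.imK_mul]
  have hijk : iq * jq = kq := by ext <;> simp [Quaternion.re_mul, Quaternion.imI_mul,
    Quaternion.imJ_mul, Quaternion.imK_mul]
  have hneg1 : g (-1) = 0 := by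
    have : ((-1:ℝ) • (1:ℍ[ℝ])) = -1 := by ext <;> simp
    rw [← this, hsmul, h1, smul_zero]
  have hii : g iq * iq + iq * g iq = 0 := by
    have := hder iq iq; rw [hiisq, hneg1] at this; exact this.symm
  have hjj : g jq * jq + jq * g jq = 0 := by
    have := hder jq jq; rw [hjjsq, hneg1] at this; exact this.symm
  have hk : g kq = g iq * jq + iq * g jq := by
    have := hder iq jq; rw [hijk] at this; exact this
  have e2 : (g iq).imI = 0 := by
    have := congrArg QuaternionAlgebra.re hii
    simp [Quaternion.re_mul] at this; linarith
  have e1 : (g iq).re = 0 := by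
    have := congrArg QuaternionAlgebra.imI hii
    simp [Quaternion.imI_mul] at this; linarith
  have e4 : (g jq).imJ = 0 := by
    have := congrArg QuaternionAlgebra.re hjj
    simp [Quaternion.re_mul] at this; linarith
  have e3 : (g jq).re = 0 := by
    have := congrArg QuaternionAlgebra.imJ hjj
    simp [Quaternion.imJ_mul] at this; linarith
  have e5 : (g jq).imI = -(g iq).imJ := by
    have hkk : g kq * kq + kq * g kq = 0 := by
      have h2 : kq * kq = -1 := by ext <;> simp [Quaternion.re_mul, Quaternion.imI_mul,
        Quaternion.imJ_mul, Quaternion.imK_mul]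
      have := hder kq kq; rw [h2, hneg1] at this; exact this.symm
    have h3 := congrArg QuaternionAlgebra.imK hkk
    rw [hk] at h3
    simp [Quaternion.re_mul, Quaternion.imI_mul, Quaternion.imJ_mul,
      Quaternion.imK_mul] at h3
    linarith
  set u : ℍ[ℝ] := ⟨0, (g jq).imK / 2, -(g iq).imK / 2, (g iq).imJ / 2⟩ with hu
  have hure : u.re = 0 := rfl
  have huI : u.imI = (g jq).imK / 2 := rfl
  have huJ : u.imJ = -(g iq).imK / 2 := rfl
  have huK : u.imK = (g iq).imJ / 2 := rfl
  refine ⟨u, hure, ?_⟩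
  have claim1 : g 1 = u * 1 - 1 * u := by
    rw [h1, mul_one, one_mul, sub_self]
  have claimI : g iq = u * iq - iq * u := by
    ext <;> simp [Quaternion.re_mul, Quaternion.imI_mul, Quaternion.imJ_mul,
      Quaternion.imK_mul, huI, huJ, huK, hure] <;> linarith
  have claimJ : g jq = u * jq - jq * u := by
    ext <;> simp [Quaternion.re_mul, Quaternion.imI_mul, Quaternion.imJ_mul,
      Quaternion.imK_mul, huI, huJ, huK, hure] <;> linarith
  have claimK : g kq = u * kq - kq * u := by
    rw [hk]
    ext <;> simp [Quaternion.re_mul, Quaternion.imI_mul, Quaternion.imJ_mul,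
      Quaternion.imK_mul, huI, huJ, huK, hure] <;> linarith
  intro q
  have expand : g q = q.re • g 1 + q.imI • g iq + q.imJ • g jq + q.imK • g kq := by
    conv_lhs => rw [quat_decomp q]
    rw [hadd, hadd, hadd, hsmul, hsmul, hsmul, hsmul]
  rw [expand, claim1, claimI, claimJ, claimK]
  conv_rhs => rw [quat_decomp q]
  simp only [mul_add, add_mul, mul_smul_comm, smul_mul_assoc, smul_sub]
  abel

end QuatDer

open QuatDer

lemma fin3_trichotomy : ∀ (i j k a : Fin 3), i ≠ j → i ≠ k → j ≠ k → a = i ∨ a = j ∨ a = k := by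
  decide

@[simp] lemma dE_val (i : Fin 3) : (dE i : M3) = Matrix.single i i 1 := rfl

@[simp] lemma oE_val (i j : Fin 3) (q : ℍ[ℝ]) :
    (oE i j q : M3) = Matrix.single i j q + Matrix.single j i (star q) := rfl

lemma jpH_val (H K : herm3H) : (jpH H K : M3) = H.1 * K.1 + K.1 * H.1 := rfl

lemma jpH_dE_same (i : Fin 3) : jpH (dE i) (dE i) = dE i + dE i := by
  apply herm_ext
  show (Matrix.single i i 1 * Matrix.single i i 1)
      + Matrix.single i i 1 * Matrix.single i i 1 = _
  rw [Matrix.single_mul_single_same, one_mul]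
  rfl

lemma jpH_dE_ne {i j : Fin 3} (hij : i ≠ j) : jpH (dE i) (dE j) = 0 := by
  apply herm_ext
  show Matrix.single i i 1 * Matrix.single j j 1
      + Matrix.single j j 1 * Matrix.single i i 1 = 0
  rw [Matrix.single_mul_single_of_ne (h := hij), Matrix.single_mul_single_of_ne (h := hij.symm), add_zero]

lemma jpH_dE_oE_left {i j : Fin 3} (hij : i ≠ j) (q : ℍ[ℝ]) :
    jpH (dE i) (oE i j q) = oE i j q := by
  apply herm_ext
  show Matrix.single i i 1
        * (Matrix.single i j q + Matrix.single j i (star q))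
      + (Matrix.single i j q + Matrix.single j i (star q))
        * Matrix.single i i 1
      = Matrix.single i j q + Matrix.single j i (star q)
  simp only [mul_add, add_mul, Matrix.single_mul_single_same, one_mul, mul_one,
    Matrix.single_mul_single_of_ne (i := i) (j := i) (c := 1) (h := hij) (d := (star q)),
    Matrix.single_mul_single_of_ne (i := i) (j := j) (c := q) (h := hij.symm) (d := 1),
    add_zero, zero_add]

lemma jpH_dE_oE_right {i j : Fin 3} (hij : i ≠ j) (q : ℍ[ℝ]) :
    jpH (dE j) (oE i j q) = oE i j q := by
  apply herm_ext
  show Matrix.single j j 1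
        * (Matrix.single i j q + Matrix.single j i (star q))
      + (Matrix.single i j q + Matrix.single j i (star q))
        * Matrix.single j j 1
      = Matrix.single i j q + Matrix.single j i (star q)
  simp only [mul_add, add_mul, Matrix.single_mul_single_same, one_mul, mul_one,
    Matrix.single_mul_single_of_ne (i := j) (j := j) (c := 1) (h := hij.symm) (d := q),
    Matrix.single_mul_single_of_ne (i := j) (j := i) (c := (star q)) (h := hij) (d := 1),
    add_zero, zero_add]
  abel

lemma jpH_dE_oE_other {i j k : Fin 3} (hki : k ≠ i) (hkj : k ≠ j) (q : ℍ[ℝ]) :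
    jpH (dE k) (oE i j q) = 0 := by
  apply herm_ext
  show Matrix.single k k 1
        * (Matrix.single i j q + Matrix.single j i (star q))
      + (Matrix.single i j q + Matrix.single j i (star q))
        * Matrix.single k k 1 = 0
  simp only [mul_add, add_mul,
    Matrix.single_mul_single_of_ne (i := k) (j := k) (c := 1) (h := hki) (d := q),
    Matrix.single_mul_single_of_ne (i := k) (j := k) (c := 1) (h := hkj) (d := (star q)),
    Matrix.single_mul_single_of_ne (i := i) (j := j) (c := q) (h := hkj.symm) (d := 1),
    Matrix.single_mul_single_of_ne (i := j) (j := i) (c := (star q)) (h := hki.symm) (d := 1), add_zero]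

lemma jpH_oE_mul (q p : ℍ[ℝ]) :
    jpH (oE 0 1 q) (oE 1 2 p) = oE 0 2 (q * p) := by
  apply herm_ext
  show (Matrix.single 0 1 q + Matrix.single 1 0 (star q))
        * (Matrix.single 1 2 p + Matrix.single 2 1 (star p))
      + (Matrix.single 1 2 p + Matrix.single 2 1 (star p))
        * (Matrix.single 0 1 q + Matrix.single 1 0 (star q))
      = Matrix.single 0 2 (q * p) + Matrix.single 2 0 (star (q * p))
  simp only [mul_add, add_mul, Matrix.single_mul_single_same,
    Matrix.single_mul_single_of_ne (i := (1:Fin 3)) (j := (0:Fin 3)) (c := (star q)) (h := (show (0:Fin 3) ≠ 1 by decide)) (d := p),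
    Matrix.single_mul_single_of_ne (i := (0:Fin 3)) (j := (1:Fin 3)) (c := q) (h := (show (1:Fin 3) ≠ 2 by decide)) (d := (star p)),
    Matrix.single_mul_single_of_ne (i := (1:Fin 3)) (j := (0:Fin 3)) (c := (star q)) (h := (show (0:Fin 3) ≠ 2 by decide)) (d := (star p)),
    Matrix.single_mul_single_of_ne (i := (1:Fin 3)) (j := (2:Fin 3)) (c := p) (h := (show (2:Fin 3) ≠ 0 by decide)) (d := q),
    Matrix.single_mul_single_of_ne (i := (2:Fin 3)) (j := (1:Fin 3)) (c := (star p)) (h := (show (1:Fin 3) ≠ 0 by decide)) (d := q),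
    Matrix.single_mul_single_of_ne (i := (1:Fin 3)) (j := (2:Fin 3)) (c := p) (h := (show (2:Fin 3) ≠ 1 by decide)) (d := (star q)),
    StarMul.star_mul, add_zero, zero_add]

lemma jpH_zero_left (K : herm3H) : jpH 0 K = 0 := by
  apply herm_ext
  show (0:M3) * K.1 + K.1 * 0 = 0
  simp

lemma jpH_zero_right (K : herm3H) : jpH K 0 = 0 := by
  apply herm_ext
  show K.1 * (0:M3) + 0 * K.1 = 0
  simp

lemma peirceOff (E : Module.End ℝ herm3H)
    (hE : ∀ H K, E (jpH H K) = jpH (E H) K + jpH H (E K))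
    (h0 : ∀ l, E (dE l) = 0)
    (i j k : Fin 3) (hij : i ≠ j) (hik : i ≠ k) (hjk : j ≠ k) (q : ℍ[ℝ]) :
    E (oE i j q) = oE i j (((E (oE i j q) : herm3H) : M3) i j) := by
  set B : M3 := ((E (oE i j q) : herm3H) : M3) with hB
  have hBh : ∀ a b, star (B a b) = B b a := herm_entry _
  have rel_i : B = Matrix.single i i 1 * B + B * Matrix.single i i 1 := by
    have h := hE (dE i) (oE i j q)
    rw [jpH_dE_oE_left hij, h0 i, jpH_zero_left, zero_add] at h
    exact congrArg Subtype.val h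
  have rel_j : B = Matrix.single j j 1 * B + B * Matrix.single j j 1 := by
    have h := hE (dE j) (oE i j q)
    rw [jpH_dE_oE_right hij, h0 j, jpH_zero_left, zero_add] at h
    exact congrArg Subtype.val h
  have rel_k : Matrix.single k k 1 * B + B * Matrix.single k k 1 = 0 := by
    have h := hE (dE k) (oE i j q)
    rw [jpH_dE_oE_other hik.symm hjk.symm, h0 k, jpH_zero_left, zero_add, map_zero] at h
    exact (congrArg Subtype.val h).symm
  have hBii : B i i = 0 := by
    have h := congrFun (congrFun rel_i i) i
    simp only [Matrix.add_apply, Matrix.single_mul_apply_same,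
      Matrix.mul_single_apply_same, one_mul, mul_one] at h
    exact (right_eq_add.mp h)
  have hBjj : B j j = 0 := by
    have h := congrFun (congrFun rel_j j) j
    simp only [Matrix.add_apply, Matrix.single_mul_apply_same,
      Matrix.mul_single_apply_same, one_mul, mul_one] at h
    exact (right_eq_add.mp h)
  have hBkk : B k k = 0 := by
    have h := congrFun (congrFun rel_k k) k
    simp only [Matrix.add_apply, Matrix.single_mul_apply_same,
      Matrix.mul_single_apply_same, one_mul, mul_one, Matrix.zero_apply] at h
    exact half_cancel (x := B k k) (y := 0) (by simpa using h)
  have hBik : B i k = 0 := by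
    have h := congrFun (congrFun rel_k i) k
    rw [Matrix.add_apply, Matrix.single_mul_apply_of_ne (i := k) (j := k) (c := 1) (a := i) (b := k) (h := hik) (M := B),
      Matrix.mul_single_apply_same, mul_one] at h
    simpa using h
  have hBjk : B j k = 0 := by
    have h := congrFun (congrFun rel_k j) k
    rw [Matrix.add_apply, Matrix.single_mul_apply_of_ne (i := k) (j := k) (c := 1) (a := j) (b := k) (h := hjk) (M := B),
      Matrix.mul_single_apply_same, mul_one] at h
    simpa using h
  have hBki : B k i = 0 := by
    have h := congrFun (congrFun rel_k k) i
    rw [Matrix.add_apply, Matrix.single_mul_apply_same,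
      Matrix.mul_single_apply_of_ne (i := k) (j := k) (c := 1) (a := k) (b := i) (hbj := hik) (M := B), one_mul] at h
    simpa using h
  have hBkj : B k j = 0 := by
    have h := congrFun (congrFun rel_k k) j
    rw [Matrix.add_apply, Matrix.single_mul_apply_same,
      Matrix.mul_single_apply_of_ne (i := k) (j := k) (c := 1) (a := k) (b := j) (hbj := hjk) (M := B), one_mul] at h
    simpa using h
  apply herm_ext
  show B = Matrix.single i j (B i j) + Matrix.single j i (star (B i j))
  refine Matrix.ext fun a b => ?_
  have ta := fin3_trichotomy i j k a hij hik hjk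
  have tb := fin3_trichotomy i j k b hij hik hjk
  rcases ta with rfl|rfl|rfl <;> rcases tb with rfl|rfl|rfl <;>
    simp [hBii, hBjj, hBkk, hBik, hBjk, hBki, hBkj, hBh, hij, hik, hjk,
      hij.symm, hik.symm, hjk.symm, Ne.symm hij, Ne.symm hik, Ne.symm hjk]

section DiagAnalysis

variable (D : Module.End ℝ herm3H)
  (hD : ∀ H K, D (jpH H K) = jpH (D H) K + jpH H (D K))

include hD

lemma diag_rel (i : Fin 3) :
    ((D (dE i) : herm3H) : M3)
      = ((D (dE i) : herm3H) : M3) * Matrix.single i i 1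
        + Matrix.single i i 1 * ((D (dE i) : herm3H) : M3) := by
  have h := hD (dE i) (dE i)
  rw [jpH_dE_same, map_add] at h
  have hv := congrArg Subtype.val h
  set A : M3 := ((D (dE i) : herm3H) : M3) with hA
  have h2 : A + A = (A * Matrix.single i i 1 + Matrix.single i i 1 * A)
      + (Matrix.single i i 1 * A + A * Matrix.single i i 1) := hv
  refine half_cancel ?_
  rw [h2]; abel

lemma diag_entry_ii (i : Fin 3) : ((D (dE i) : herm3H) : M3) i i = 0 := by
  have h := congrFun (congrFun (diag_rel D hD i) i) i
  rw [Matrix.add_apply, Matrix.mul_single_apply_same,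
    Matrix.single_mul_apply_same, mul_one, one_mul] at h
  exact (right_eq_add.mp h)

lemma diag_entry_off (i k l : Fin 3) (hk : k ≠ i) (hl : l ≠ i) :
    ((D (dE i) : herm3H) : M3) k l = 0 := by
  have h := congrFun (congrFun (diag_rel D hD i) k) l
  rw [Matrix.add_apply, Matrix.mul_single_apply_of_ne (hbj := hl),
    Matrix.single_mul_apply_of_ne (h := hk), add_zero] at h
  exact h

lemma diag_cross (i j : Fin 3) (hij : i ≠ j) :
    ((D (dE i) : herm3H) : M3) i j + ((D (dE j) : herm3H) : M3) i j = 0 := by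
  have h := hD (dE i) (dE j)
  rw [jpH_dE_ne hij, map_zero] at h
  have hv := congrArg Subtype.val h.symm
  have h2 : (((D (dE i) : herm3H) : M3) * Matrix.single j j 1
      + Matrix.single j j 1 * ((D (dE i) : herm3H) : M3))
      + (Matrix.single i i 1 * ((D (dE j) : herm3H) : M3)
      + ((D (dE j) : herm3H) : M3) * Matrix.single i i 1) = 0 := hv
  have h3 := congrFun (congrFun h2 i) j
  rw [Matrix.add_apply, Matrix.add_apply, Matrix.add_apply,
    Matrix.mul_single_apply_same,
    Matrix.single_mul_apply_of_ne (h := hij),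
    Matrix.single_mul_apply_same,
    Matrix.mul_single_apply_of_ne (hbj := hij.symm),
    mul_one, one_mul, add_zero, add_zero, Matrix.zero_apply] at h3
  exact h3

end DiagAnalysis

/-- The off-diagonal antihermitian correction matrix. -/
noncomputable def Xmat (D : Module.End ℝ herm3H) : M3 :=
  Matrix.of fun k l => if k = l then 0 else ((D (dE l) : herm3H) : M3) k l

section XmatFacts

variable (D : Module.End ℝ herm3H)
  (hD : ∀ H K, D (jpH H K) = jpH (D H) K + jpH H (D K))

include hD

lemma Xmat_anti : (Xmat D)ᴴ = -(Xmat D) := by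
  refine Matrix.ext fun k l => ?_
  rw [Matrix.conjTranspose_apply, Matrix.neg_apply]
  by_cases hkl : k = l
  · subst hkl
    simp [Xmat]
  · have h1 : Xmat D l k = ((D (dE k) : herm3H) : M3) l k := by
      simp [Xmat, Ne.symm hkl]
    have h2 : Xmat D k l = ((D (dE l) : herm3H) : M3) k l := by
      simp [Xmat, hkl]
    rw [h1, h2, herm_entry]
    exact eq_neg_of_add_eq_zero_left (diag_cross D hD k l hkl)

lemma Xmat_comm (j : Fin 3) :
    Xmat D * Matrix.single j j 1 - Matrix.single j j 1 * Xmat D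
      = ((D (dE j) : herm3H) : M3) := by
  refine Matrix.ext fun k l => ?_
  rw [Matrix.sub_apply]
  by_cases hk : k = j <;> by_cases hl : l = j
  · rw [hk, hl, Matrix.mul_single_apply_same,
      Matrix.single_mul_apply_same,
      mul_one, one_mul, sub_self, diag_entry_ii D hD]
  · rw [hk, Matrix.mul_single_apply_of_ne (hbj := hl),
      Matrix.single_mul_apply_same, one_mul, zero_sub]
    have hX : Xmat D j l = ((D (dE l) : herm3H) : M3) j l := by
      have : ¬ (j = l) := fun h => hl h.symm
      simp [Xmat, this]
    rw [hX]
    exact neg_eq_of_add_eq_zero_left (diag_cross D hD j l (fun h => hl h.symm))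
  · rw [hl, Matrix.mul_single_apply_same,
      Matrix.single_mul_apply_of_ne (h := hk), mul_one, sub_zero]
    simp [Xmat, hk]
  · rw [Matrix.mul_single_apply_of_ne (hbj := hl),
      Matrix.single_mul_apply_of_ne (h := hk), sub_self,
      diag_entry_off D hD j k l hk hl]

end XmatFacts

lemma real_smul_one (r : ℝ) : r • (1:ℍ[ℝ]) = (r : ℍ[ℝ]) := by ext <;> simp

lemma herm_decomp (H : herm3H) :
    H = (H.1 0 0).re • dE 0 + (H.1 1 1).re • dE 1 + (H.1 2 2).re • dE 2
      + oE 0 1 (H.1 0 1) + oE 0 2 (H.1 0 2) + oE 1 2 (H.1 1 2) := by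
  have hsym := herm_entry H
  have hr0 : ((H.1 0 0).re : ℍ[ℝ]) = H.1 0 0 := quat_real_of_star_eq (hsym 0 0)
  have hr1 : ((H.1 1 1).re : ℍ[ℝ]) = H.1 1 1 := quat_real_of_star_eq (hsym 1 1)
  have hr2 : ((H.1 2 2).re : ℍ[ℝ]) = H.1 2 2 := quat_real_of_star_eq (hsym 2 2)
  apply herm_ext
  show H.1 = _
  refine Matrix.ext fun a b => ?_
  have hval : (((H.1 0 0).re • dE 0 + (H.1 1 1).re • dE 1 + (H.1 2 2).re • dE 2
      + oE 0 1 (H.1 0 1) + oE 0 2 (H.1 0 2) + oE 1 2 (H.1 1 2) : herm3H) : M3)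
      = (H.1 0 0).re • (dE 0 : M3) + (H.1 1 1).re • (dE 1 : M3) + (H.1 2 2).re • (dE 2 : M3)
      + (oE 0 1 (H.1 0 1) : M3) + (oE 0 2 (H.1 0 2) : M3) + (oE 1 2 (H.1 1 2) : M3) := rfl
  rw [hval]
  fin_cases a <;> fin_cases b <;>
    simp [Matrix.add_apply, Matrix.smul_apply, real_smul_one, hr0, hr1, hr2, hsym 0 1,
      hsym 0 2, hsym 1 2]

lemma cHom_ker : ∀ X : sq3, cHom X = 0 → X = 0 := by
  intro X hX0
  have hF : ∀ H : herm3H, X.1 * H.1 - H.1 * X.1 = 0 := by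
    intro H
    have h1 : cEnd X.1 X.2 H = (0 : Module.End ℝ herm3H) H := by
      rw [show cEnd X.1 X.2 = ((cHom X : jderH) : Module.End ℝ herm3H) from rfl, hX0]
      rfl
    exact congrArg Subtype.val h1
  have hanti : ∀ a b, star (X.1 a b) = -(X.1 b a) := by
    intro a b
    have := congrFun (congrFun X.2 b) a
    simpa [Matrix.conjTranspose_apply, Matrix.neg_apply] using this
  have hoff : ∀ k j : Fin 3, k ≠ j → X.1 k j = 0 := by
    intro k j hkj
    have h := hF (dE j)
    rw [dE_val, sub_eq_zero] at h
    have h2 := congrFun (congrFun h k) j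
    rw [Matrix.mul_single_apply_same, mul_one,
      Matrix.single_mul_apply_of_ne (h := hkj)] at h2
    exact h2
  have hcomm01 : ∀ q : ℍ[ℝ], X.1 0 0 * q = q * X.1 1 1 := by
    intro q
    have h := hF (oE 0 1 q)
    rw [oE_val, sub_eq_zero, Matrix.mul_add, Matrix.add_mul] at h
    have h2 := congrFun (congrFun h 0) 1
    rw [Matrix.add_apply, Matrix.add_apply, Matrix.mul_single_apply_same,
      Matrix.mul_single_apply_of_ne (hbj := show (1:Fin 3) ≠ 0 by decide),
      Matrix.single_mul_apply_same,
      Matrix.single_mul_apply_of_ne (h := show (0:Fin 3) ≠ 1 by decide),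
      add_zero, add_zero] at h2
    exact h2
  have hcomm02 : ∀ q : ℍ[ℝ], X.1 0 0 * q = q * X.1 2 2 := by
    intro q
    have h := hF (oE 0 2 q)
    rw [oE_val, sub_eq_zero, Matrix.mul_add, Matrix.add_mul] at h
    have h2 := congrFun (congrFun h 0) 2
    rw [Matrix.add_apply, Matrix.add_apply, Matrix.mul_single_apply_same,
      Matrix.mul_single_apply_of_ne (hbj := show (2:Fin 3) ≠ 0 by decide),
      Matrix.single_mul_apply_same,
      Matrix.single_mul_apply_of_ne (h := show (0:Fin 3) ≠ 2 by decide),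
      add_zero, add_zero] at h2
    exact h2
  have h11 : X.1 1 1 = X.1 0 0 := by
    have := hcomm01 1; rw [mul_one, one_mul] at this; exact this.symm
  have h22 : X.1 2 2 = X.1 0 0 := by
    have := hcomm02 1; rw [mul_one, one_mul] at this; exact this.symm
  have hq : X.1 0 0 = 0 := by
    set x : ℍ[ℝ] := X.1 0 0 with hx
    have hci : x * QuatDer.iq = QuatDer.iq * x := by
      have := hcomm01 QuatDer.iq; rw [h11] at this; exact this
    have hcj : x * QuatDer.jq = QuatDer.jq * x := by
      have := hcomm01 QuatDer.jq; rw [h11] at this; exact this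
    have himK : x.imK = 0 := by
      have := congrArg QuaternionAlgebra.imJ hci
      simp [Quaternion.imJ_mul] at this; linarith
    have himJ : x.imJ = 0 := by
      have := congrArg QuaternionAlgebra.imK hci
      simp [Quaternion.imK_mul] at this; linarith
    have himI : x.imI = 0 := by
      have := congrArg QuaternionAlgebra.imK hcj
      simp [Quaternion.imK_mul] at this; linarith
    have hre : x.re = 0 := by
      have := congrArg QuaternionAlgebra.re (hanti 0 0)
      simp at this; linarith
    ext <;> simp [himI, himJ, himK, hre]
  apply Subtype.ext
  refine Matrix.ext fun a b => ?_
  by_cases hab : a = b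
  · subst hab
    fin_cases a
    · simpa using hq
    · simpa [h11] using hq
    · simpa [h22] using hq
  · simpa using hoff a b hab

lemma cHom_injective : Function.Injective cHom := by
  intro a b hab
  have hsub : cHom (a - b) = 0 := by
    have : cHom (a - b) = cHom a - cHom b := map_sub cHom.toLinearMap a b
    rw [this, hab, sub_self]
  have := cHom_ker _ hsub
  exact sub_eq_zero.mp this

lemma jpH_oE_one {i j : Fin 3} (hij : i ≠ j) :
    jpH (oE i j 1) (oE i j 1) = (dE i + dE j) + (dE i + dE j) := by
  apply herm_ext
  show (Matrix.single i j 1 + Matrix.single j i (star (1:ℍ[ℝ])))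
      * (Matrix.single i j 1 + Matrix.single j i (star (1:ℍ[ℝ])))
      + (Matrix.single i j 1 + Matrix.single j i (star (1:ℍ[ℝ])))
      * (Matrix.single i j 1 + Matrix.single j i (star (1:ℍ[ℝ])))
      = ((Matrix.single i i 1 + Matrix.single j j 1)
        + (Matrix.single i i 1 + Matrix.single j j 1) : M3)
  simp only [star_one, mul_add, add_mul, Matrix.single_mul_single_same, one_mul]
  rw [Matrix.single_mul_single_of_ne (i := i) (j := j) (c := 1) (h := hij.symm) (d := 1),
    Matrix.single_mul_single_of_ne (i := j) (j := i) (c := 1) (h := hij) (d := 1)]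
  abel

lemma jpH_oE_oE_val {i j : Fin 3} (hij : i ≠ j) (a b : ℍ[ℝ]) :
    ((jpH (oE i j a) (oE i j b) : herm3H) : M3)
      = Matrix.single i i (a * star b + b * star a)
        + Matrix.single j j (star a * b + star b * a) := by
  show (Matrix.single i j a + Matrix.single j i (star a))
      * (Matrix.single i j b + Matrix.single j i (star b))
      + (Matrix.single i j b + Matrix.single j i (star b))
      * (Matrix.single i j a + Matrix.single j i (star a)) = _
  simp only [mul_add, add_mul, Matrix.single_mul_single_same, Matrix.single_add]
  rw [Matrix.single_mul_single_of_ne (i := i) (j := j) (c := a) (h := hij.symm) (d := b),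
    Matrix.single_mul_single_of_ne (i := i) (j := j) (c := b) (h := hij.symm) (d := a),
    Matrix.single_mul_single_of_ne (i := j) (j := i) (c := (star a)) (h := hij) (d := (star b)),
    Matrix.single_mul_single_of_ne (i := j) (j := i) (c := (star b)) (h := hij) (d := (star a))]
  abel

lemma offdiag_one_re (E : Module.End ℝ herm3H)
    (hE : ∀ H K, E (jpH H K) = jpH (E H) K + jpH H (E K))
    (h0 : ∀ l, E (dE l) = 0)
    (i j k : Fin 3) (hij : i ≠ j) (hik : i ≠ k) (hjk : j ≠ k) :
    (((E (oE i j 1) : herm3H) : M3) i j).re = 0 := by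
  have hP := peirceOff E hE h0 i j k hij hik hjk 1
  set w : ℍ[ℝ] := ((E (oE i j 1) : herm3H) : M3) i j with hw
  have h := hE (oE i j 1) (oE i j 1)
  rw [jpH_oE_one hij, map_add, map_add, h0, h0, add_zero, add_zero, hP] at h
  have hv := congrArg (fun H : herm3H => ((H : M3) i i).re) h
  simp only [ZeroMemClass.coe_zero, Matrix.zero_apply, Quaternion.re_zero,
    Submodule.coe_add, Matrix.add_apply, jpH_oE_oE_val hij] at hv
  simp only [Matrix.single_apply_same,
    Matrix.single_apply_of_row_ne hij.symm, star_one, mul_one, one_mul,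
    add_zero, zero_add, Quaternion.re_add, Quaternion.re_star] at hv
  linarith

lemma stdBasisMatrix_star_diag (i : Fin 3) (y : ℍ[ℝ]) :
    (Matrix.single i i y)ᴴ = Matrix.single i i (star y) := by
  refine Matrix.ext fun a b => ?_
  simp only [Matrix.conjTranspose_apply, Matrix.single, Matrix.of_apply,
    apply_ite (star : ℍ[ℝ] → ℍ[ℝ]), star_zero, and_comm]

lemma stdBasisMatrix_neg' (i j : Fin 3) (c : ℍ[ℝ]) :
    Matrix.single i j (-c) = -(Matrix.single i j c) := by
  refine Matrix.ext fun a b => ?_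
  simp only [Matrix.single, Matrix.of_apply, Matrix.neg_apply]
  split <;> simp

lemma Efinal (E : Module.End ℝ herm3H)
    (hE : ∀ H K, E (jpH H K) = jpH (E H) K + jpH H (E K))
    (h0 : ∀ l, E (dE l) = 0) :
    ∃ u w01 w12 : ℍ[ℝ], u.re = 0 ∧ w01.re = 0 ∧ w12.re = 0 ∧
      (∀ q, E (oE 0 1 q) = oE 0 1 ((u + w01) * q - q * u)) ∧
      (∀ q, E (oE 1 2 q) = oE 1 2 (u * q - q * (u - w12))) ∧
      (∀ q, E (oE 0 2 q) = oE 0 2 ((u + w01) * q - q * (u - w12))) := by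
  set d01 : ℍ[ℝ] → ℍ[ℝ] := fun q => ((E (oE 0 1 q) : herm3H) : M3) 0 1 with hd01def
  set d12 : ℍ[ℝ] → ℍ[ℝ] := fun q => ((E (oE 1 2 q) : herm3H) : M3) 1 2 with hd12def
  set d02 : ℍ[ℝ] → ℍ[ℝ] := fun q => ((E (oE 0 2 q) : herm3H) : M3) 0 2 with hd02def
  have hP01 : ∀ q, E (oE 0 1 q) = oE 0 1 (d01 q) :=
    fun q => peirceOff E hE h0 0 1 2 (by decide) (by decide) (by decide) q
  have hP12 : ∀ q, E (oE 1 2 q) = oE 1 2 (d12 q) :=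
    fun q => peirceOff E hE h0 1 2 0 (by decide) (by decide) (by decide) q
  have hP02 : ∀ q, E (oE 0 2 q) = oE 0 2 (d02 q) :=
    fun q => peirceOff E hE h0 0 2 1 (by decide) (by decide) (by decide) q
  have hoE_entry : ∀ (x y : ℍ[ℝ]), ((oE 0 2 x + oE 0 2 y : herm3H) : M3) 0 2 = x + y := by
    intro x y
    show ((oE 0 2 x : M3) + (oE 0 2 y : M3)) 0 2 = x + y
    rw [Matrix.add_apply, oE_val, oE_val, Matrix.add_apply, Matrix.add_apply,
      Matrix.single_apply_same, Matrix.single_apply_same,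
      Matrix.single_apply_of_row_ne (show (2:Fin 3) ≠ 0 by decide),
      Matrix.single_apply_of_row_ne (show (2:Fin 3) ≠ 0 by decide),
      add_zero, add_zero]
  have hrel : ∀ q p, d02 (q * p) = d01 q * p + q * d12 p := by
    intro q p
    have h := hE (oE 0 1 q) (oE 1 2 p)
    rw [jpH_oE_mul, hP01 q, hP12 p, jpH_oE_mul, jpH_oE_mul, hP02 (q * p)] at h
    have hv := congrArg (fun H : herm3H => (H : M3) 0 2) h
    rw [oE_val, Matrix.add_apply, Matrix.single_apply_same,
      Matrix.single_apply_of_row_ne (show (2:Fin 3) ≠ 0 by decide), add_zero] at hv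
    rw [hv]
    exact (hoE_entry _ _)
  have hadd02 : ∀ p q, d02 (p + q) = d02 p + d02 q := by
    intro p q
    show ((E (oE 0 2 (p + q)) : herm3H) : M3) 0 2 = _
    rw [oE_add, map_add]
    rfl
  have hsmul02 : ∀ (r : ℝ) (q : ℍ[ℝ]), d02 (r • q) = r • d02 q := by
    intro r q
    show ((E (oE 0 2 (r • q)) : herm3H) : M3) 0 2 = _
    rw [oE_smul, E.map_smul]
    rfl
  set w01 : ℍ[ℝ] := d01 1 with hw01def
  set w12 : ℍ[ℝ] := d12 1 with hw12def
  have h1 : ∀ q, d01 q = d02 q - q * w12 := by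
    intro q
    have h := hrel q 1
    rw [mul_one, mul_one, ← hw12def] at h
    exact eq_sub_of_add_eq h.symm
  have h2 : ∀ p, d12 p = d02 p - w01 * p := by
    intro p
    have h := hrel 1 p
    rw [one_mul, one_mul, ← hw01def] at h
    have h' : d12 p + w01 * p = d02 p := by rw [h]; abel
    exact eq_sub_of_add_eq h'
  obtain ⟨u, hure, hu⟩ := quat_inner_der (fun q => d02 q - w01 * q - q * w12)
    (by intro p q
        simp only [hadd02]
        noncomm_ring)
    (by intro r q
        simp only [hsmul02, mul_smul_comm, smul_mul_assoc, smul_sub])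
    (by intro p q
        simp only [hrel p q, h1 p, h2 q]
        noncomm_ring)
  have hu' : ∀ q, d02 q = u * q - q * u + w01 * q + q * w12 := by
    intro q
    have h : d02 q - w01 * q - q * w12 = u * q - q * u := hu q
    have h' : d02 q - (w01 * q + q * w12) = u * q - q * u := by rw [← h]; abel
    have h'' := sub_eq_iff_eq_add.mp h'
    rw [h'']; abel
  have hw01re : w01.re = 0 := offdiag_one_re E hE h0 0 1 2 (by decide) (by decide) (by decide)
  have hw12re : w12.re = 0 := offdiag_one_re E hE h0 1 2 0 (by decide) (by decide) (by decide)
  refine ⟨u, w01, w12, hure, hw01re, hw12re, ?_, ?_, ?_⟩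
  · intro q
    rw [hP01 q, h1 q, hu' q]
    congr 1
    noncomm_ring
  · intro q
    rw [hP12 q, h2 q, hu' q]
    congr 1
    noncomm_ring
  · intro q
    rw [hP02 q, hu' q]
    congr 1
    noncomm_ring

lemma cHom_surjective : Function.Surjective cHom := by
  rintro ⟨D, hDmem⟩
  have hD : ∀ H K, D (jpH H K) = jpH (D H) K + jpH H (D K) := hDmem
  have hXa : (Xmat D)ᴴ = -(Xmat D) := Xmat_anti D hD
  set E : Module.End ℝ herm3H := D - cEnd (Xmat D) hXa with hEdef
  have hEapp : ∀ H : herm3H, ((E H : herm3H) : M3)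
      = ((D H : herm3H) : M3) - (Xmat D * H.1 - H.1 * Xmat D) := fun H => rfl
  have hcE := cEnd_mem (Xmat D) hXa
  have hE : ∀ H K, E (jpH H K) = jpH (E H) K + jpH H (E K) := by
    intro H K
    have h1 : E (jpH H K) = D (jpH H K) - cEnd (Xmat D) hXa (jpH H K) := rfl
    rw [h1, hD, hcE]
    show _ = jpH (D H - cEnd (Xmat D) hXa H) K + jpH H (D K - cEnd (Xmat D) hXa K)
    rw [jpH_subl, jpH_subr]
    abel
  have hE0 : ∀ l, E (dE l) = 0 := by
    intro l
    apply herm_ext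
    rw [hEapp]
    show ((D (dE l) : herm3H) : M3) - (Xmat D * Matrix.single l l 1
      - Matrix.single l l 1 * Xmat D) = ((0 : herm3H) : M3)
    rw [Xmat_comm D hD l, sub_self]
    rfl
  obtain ⟨u, w01, w12, hure, hw01re, hw12re, hf01, hf12, hf02⟩ := Efinal E hE hE0
  obtain ⟨y0, hy0⟩ : ∃ y : ℍ[ℝ], y = u + w01 := ⟨_, rfl⟩
  obtain ⟨y1, hy1⟩ : ∃ y : ℍ[ℝ], y = u := ⟨_, rfl⟩
  obtain ⟨y2, hy2⟩ : ∃ y : ℍ[ℝ], y = u - w12 := ⟨_, rfl⟩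
  simp only [← hy0, ← hy2] at hf01 hf12 hf02
  simp only [← hy1] at hf01 hf12 hf02
  have hs0 : star y0 = -y0 := by
    rw [hy0]
    exact quat_imag_of_star_eq_neg (by rw [Quaternion.re_add, hure, hw01re, add_zero])
  have hs1 : star y1 = -y1 := by rw [hy1]; exact quat_imag_of_star_eq_neg hure
  have hs2 : star y2 = -y2 := by
    rw [hy2]
    exact quat_imag_of_star_eq_neg (by rw [Quaternion.re_sub, hure, hw12re, sub_zero])
  set Y : M3 := Matrix.single 0 0 y0 + Matrix.single 1 1 y1
    + Matrix.single 2 2 y2 with hY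
  set Z : M3 := Xmat D + Y with hZ
  have hZa : Zᴴ = -Z := by
    rw [hZ, Matrix.conjTranspose_add, hY, Matrix.conjTranspose_add, Matrix.conjTranspose_add,
      hXa, stdBasisMatrix_star_diag, stdBasisMatrix_star_diag,
      stdBasisMatrix_star_diag, hs0, hs1, hs2, stdBasisMatrix_neg', stdBasisMatrix_neg',
      stdBasisMatrix_neg']
    abel
  have hYcommd : ∀ j : Fin 3,
      Y * Matrix.single j j 1 = Matrix.single j j 1 * Y := by
    intro j
    fin_cases j <;>
    · refine Matrix.ext fun a b => ?_
      fin_cases a <;> fin_cases b <;>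
        simp [hY, Matrix.mul_apply, Fin.sum_univ_three, Matrix.single, Matrix.of_apply,
          Matrix.add_apply]
  have hgd : ∀ j : Fin 3, ((D (dE j) : herm3H) : M3) = Z * (dE j : M3) - (dE j : M3) * Z := by
    intro j
    rw [← Xmat_comm D hD j, hZ, dE_val]
    rw [Matrix.add_mul, Matrix.mul_add, hYcommd j]
    abel
  have hYP01 : ∀ q : ℍ[ℝ], (oE 0 1 (y0 * q - q * y1) : M3)
      = Y * (oE 0 1 q : M3) - (oE 0 1 q : M3) * Y := by
    intro q
    refine Matrix.ext fun a b => ?_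
    fin_cases a <;> fin_cases b <;>
      simp [hY, oE_val, Matrix.mul_apply, Fin.sum_univ_three, Matrix.single,
        Matrix.of_apply, Matrix.add_apply, Matrix.sub_apply, star_sub, StarMul.star_mul,
        hs0, hs1, mul_neg, neg_mul] <;> abel
  have hYP12 : ∀ q : ℍ[ℝ], (oE 1 2 (y1 * q - q * y2) : M3)
      = Y * (oE 1 2 q : M3) - (oE 1 2 q : M3) * Y := by
    intro q
    refine Matrix.ext fun a b => ?_
    fin_cases a <;> fin_cases b <;>
      simp [hY, oE_val, Matrix.mul_apply, Fin.sum_univ_three, Matrix.single,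
        Matrix.of_apply, Matrix.add_apply, Matrix.sub_apply, star_sub, StarMul.star_mul,
        hs1, hs2, mul_neg, neg_mul] <;> abel
  have hYP02 : ∀ q : ℍ[ℝ], (oE 0 2 (y0 * q - q * y2) : M3)
      = Y * (oE 0 2 q : M3) - (oE 0 2 q : M3) * Y := by
    intro q
    refine Matrix.ext fun a b => ?_
    fin_cases a <;> fin_cases b <;>
      simp [hY, oE_val, Matrix.mul_apply, Fin.sum_univ_three, Matrix.single,
        Matrix.of_apply, Matrix.add_apply, Matrix.sub_apply, star_sub, StarMul.star_mul,
        hs0, hs2, mul_neg, neg_mul] <;> abel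
  have hgo01 : ∀ q : ℍ[ℝ], ((D (oE 0 1 q) : herm3H) : M3)
      = Z * (oE 0 1 q : M3) - (oE 0 1 q : M3) * Z := by
    intro q
    have hD1 : ((D (oE 0 1 q) : herm3H) : M3) = ((E (oE 0 1 q) : herm3H) : M3)
        + (Xmat D * (oE 0 1 q : M3) - (oE 0 1 q : M3) * Xmat D) := by
      rw [hEapp]; abel
    rw [hD1, hf01 q, hYP01 q, hZ]
    noncomm_ring
  have hgo12 : ∀ q : ℍ[ℝ], ((D (oE 1 2 q) : herm3H) : M3)
      = Z * (oE 1 2 q : M3) - (oE 1 2 q : M3) * Z := by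
    intro q
    have hD1 : ((D (oE 1 2 q) : herm3H) : M3) = ((E (oE 1 2 q) : herm3H) : M3)
        + (Xmat D * (oE 1 2 q : M3) - (oE 1 2 q : M3) * Xmat D) := by
      rw [hEapp]; abel
    rw [hD1, hf12 q, hYP12 q, hZ]
    noncomm_ring
  have hgo02 : ∀ q : ℍ[ℝ], ((D (oE 0 2 q) : herm3H) : M3)
      = Z * (oE 0 2 q : M3) - (oE 0 2 q : M3) * Z := by
    intro q
    have hD1 : ((D (oE 0 2 q) : herm3H) : M3) = ((E (oE 0 2 q) : herm3H) : M3)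
        + (Xmat D * (oE 0 2 q : M3) - (oE 0 2 q : M3) * Xmat D) := by
      rw [hEapp]; abel
    rw [hD1, hf02 q, hYP02 q, hZ]
    noncomm_ring
  have key : ∀ H : herm3H, ((D H : herm3H) : M3) = Z * (H : M3) - (H : M3) * Z := by
    intro H
    have hv : (H : M3) = ((H : M3) 0 0).re • (dE 0 : M3) + ((H : M3) 1 1).re • (dE 1 : M3)
        + ((H : M3) 2 2).re • (dE 2 : M3) + (oE 0 1 ((H : M3) 0 1) : M3)
        + (oE 0 2 ((H : M3) 0 2) : M3) + (oE 1 2 ((H : M3) 1 2) : M3) :=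
      congrArg Subtype.val (herm_decomp H)
    conv_lhs => rw [herm_decomp H]
    rw [map_add, map_add, map_add, map_add, map_add]
    rw [LinearMap.map_smul, LinearMap.map_smul, LinearMap.map_smul]
    show (((H : M3) 0 0).re • (D (dE 0)) + ((H : M3) 1 1).re • (D (dE 1))
      + ((H : M3) 2 2).re • (D (dE 2)) + D (oE 0 1 ((H : M3) 0 1))
      + D (oE 0 2 ((H : M3) 0 2)) + D (oE 1 2 ((H : M3) 1 2)) : herm3H).1 = _
    have hcoe : (((H : M3) 0 0).re • (D (dE 0)) + ((H : M3) 1 1).re • (D (dE 1))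
        + ((H : M3) 2 2).re • (D (dE 2)) + D (oE 0 1 ((H : M3) 0 1))
        + D (oE 0 2 ((H : M3) 0 2)) + D (oE 1 2 ((H : M3) 1 2)) : herm3H).1
        = ((H : M3) 0 0).re • ((D (dE 0) : herm3H) : M3)
          + ((H : M3) 1 1).re • ((D (dE 1) : herm3H) : M3)
          + ((H : M3) 2 2).re • ((D (dE 2) : herm3H) : M3)
          + ((D (oE 0 1 ((H : M3) 0 1)) : herm3H) : M3)
          + ((D (oE 0 2 ((H : M3) 0 2)) : herm3H) : M3)
          + ((D (oE 1 2 ((H : M3) 1 2)) : herm3H) : M3) := rfl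
    rw [hcoe, hgd 0, hgd 1, hgd 2, hgo01, hgo02, hgo12]
    conv_rhs => rw [hv]
    simp only [Matrix.mul_add, Matrix.add_mul, mul_smul_comm, smul_mul_assoc, smul_sub]
    abel
  refine ⟨⟨Z, hZa⟩, ?_⟩
  apply Subtype.ext
  apply LinearMap.ext
  intro H
  apply herm_ext
  show Z * (H : M3) - (H : M3) * Z = ((D H : herm3H) : M3)
  exact (key H).symm

/-- The map `X ↦ C_X`, `C_X(H) = XH - HX`, is an isomorphism of real Lie algebras from
`sq(3)` onto the Lie algebra of Jordan derivations of `H₃(ℍ)`. -/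
theorem statement14 :
    ∃ e : sq3 ≃ₗ⁅ℝ⁆ jderH, ∀ (X : sq3) (H : herm3H),
      (((e X : Module.End ℝ herm3H) H : Matrix (Fin 3) (Fin 3) ℍ[ℝ]))
        = (X : Matrix (Fin 3) (Fin 3) ℍ[ℝ]) * (H : Matrix (Fin 3) (Fin 3) ℍ[ℝ])
            - (H : Matrix (Fin 3) (Fin 3) ℍ[ℝ]) * (X : Matrix (Fin 3) (Fin 3) ℍ[ℝ]) := by
  refine ⟨LieEquiv.ofBijective cHom ⟨cHom_injective, cHom_surjective⟩, ?_⟩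
  intro X H
  rfl
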